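/- Let X be a càdlàg function, c > 0, and assume T_d^{2c}X ≥ T_u^{2c}X. Define X^c by: X^c(s) = X(0) on [0, T_{u,0}); X^c(s) = sup_{t∈[T_{u,k}, s]} X(t) − c on [T_{u,k}, T_{d,k}); X^c(s) = inf_{t∈[T_{d,k}, s]} X(t) + c on [T_{d,k}, T_{u,k+1}). Then for every s ≥ 0, |X(s) − X^c(s)| ≤ c. -/

import Mathlib

open Set Filter MeasureTheory
open scoped ENNReal NNReal Topology

noncomputable section

/-- A function is càdlàg: right-continuous with left limits. -/
def Cadlag (f : ℝ → ℝ) : Prop :=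
  (∀ t : ℝ, Tendsto f (nhdsWithin t (Ici t)) (nhds (f t))) ∧
  (∀ t : ℝ, ∃ l : ℝ, Tendsto f (nhdsWithin t (Iio t)) (nhds l))

/-- Jump of `f` at `s`. -/
def jumpAt (f : ℝ → ℝ) (s : ℝ) : ℝ := f s - Function.leftLim f s

def supOn (f : ℝ → ℝ) (a b : ℝ) : ℝ := sSup (f '' Icc a b)
def infOn (f : ℝ → ℝ) (a b : ℝ) : ℝ := sInf (f '' Icc a b)

def TuZero (X : ℝ → ℝ) (c : ℝ) : ℝ≥0∞ :=
  sInf {u | ∃ s : ℝ, 0 ≤ s ∧ u = ENNReal.ofReal s ∧ supOn X 0 s - X 0 > c}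

def TdIni (X : ℝ → ℝ) (c : ℝ) : ℝ≥0∞ :=
  sInf {u | ∃ s : ℝ, 0 ≤ s ∧ u = ENNReal.ofReal s ∧ X 0 - infOn X 0 s > c}

def nextTd (X : ℝ → ℝ) (c : ℝ) (a : ℝ≥0∞) : ℝ≥0∞ :=
  sInf {u | ∃ s : ℝ, 0 ≤ s ∧ a ≤ ENNReal.ofReal s ∧ u = ENNReal.ofReal s ∧
    supOn X a.toReal s - X s > 2 * c}

def nextTu (X : ℝ → ℝ) (c : ℝ) (a : ℝ≥0∞) : ℝ≥0∞ :=
  sInf {u | ∃ s : ℝ, 0 ≤ s ∧ a ≤ ENNReal.ofReal s ∧ u = ENNReal.ofReal s ∧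
    X s - infOn X a.toReal s > 2 * c}

def TuTd (X : ℝ → ℝ) (c : ℝ) : ℕ → ℝ≥0∞ × ℝ≥0∞
  | 0 => (TuZero X c, nextTd X c (TuZero X c))
  | (n + 1) =>
      let tu := nextTu X c (TuTd X c n).2
      (tu, nextTd X c tu)

def Tu (X : ℝ → ℝ) (c : ℝ) (n : ℕ) : ℝ≥0∞ := (TuTd X c n).1
def Td (X : ℝ → ℝ) (c : ℝ) (n : ℕ) : ℝ≥0∞ := (TuTd X c n).2

open Classical in
/-- The finite variation approximation `X^c` from the paper's construction. -/
def Xc (X : ℝ → ℝ) (c : ℝ) (s : ℝ) : ℝ :=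
  if ENNReal.ofReal s < Tu X c 0 then X 0
  else if h : ∃ k, Tu X c k ≤ ENNReal.ofReal s ∧ ENNReal.ofReal s < Td X c k then
    supOn X (Tu X c (Nat.find h)).toReal s - c
  else if h' : ∃ k, Td X c k ≤ ENNReal.ofReal s ∧ ENNReal.ofReal s < Tu X c (k + 1) then
    infOn X (Td X c (Nat.find h')).toReal s + c
  else 0

/-- Truncated variation at level `c` on `[0, T]`. -/
def TVtrunc (f : ℝ → ℝ) (c T : ℝ) : ℝ≥0∞ :=
  ⨆ (n : ℕ) (t : ℕ → ℝ) (_ : Monotone t) (_ : ∀ i, t i ∈ Icc (0 : ℝ) T),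
    ∑ i ∈ Finset.range n, ENNReal.ofReal (|f (t (i + 1)) - f (t i)| - c)

/-- Upward truncated variation at level `c` on `[0, T]`. -/
def UTVtrunc (f : ℝ → ℝ) (c T : ℝ) : ℝ≥0∞ :=
  ⨆ (n : ℕ) (t : ℕ → ℝ) (_ : Monotone t) (_ : ∀ i, t i ∈ Icc (0 : ℝ) T),
    ∑ i ∈ Finset.range n, ENNReal.ofReal (f (t (i + 1)) - f (t i) - c)

/-- Downward truncated variation at level `c` on `[0, T]`. -/
def DTVtrunc (f : ℝ → ℝ) (c T : ℝ) : ℝ≥0∞ :=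
  ⨆ (n : ℕ) (t : ℕ → ℝ) (_ : Monotone t) (_ : ∀ i, t i ∈ Icc (0 : ℝ) T),
    ∑ i ∈ Finset.range n, ENNReal.ofReal (f (t i) - f (t (i + 1)) - c)

/-- Left-endpoint Riemann–Stieltjes sum of `f` against `g` over the dyadic
partition of `[0, t]` with `2 ^ n` pieces. -/
def RSsum (f g : ℝ → ℝ) (t : ℝ) (n : ℕ) : ℝ :=
  ∑ i ∈ Finset.range (2 ^ n),
    f (t * i / 2 ^ n) * (g (t * (i + 1) / 2 ^ n) - g (t * i / 2 ^ n))

/-- Pathwise Lebesgue–Stieltjes integral `∫_0^t f_- dg`, realized as the limit of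
left-endpoint Riemann–Stieltjes sums along dyadic partitions. -/
def LSint (f g : ℝ → ℝ) (t : ℝ) : ℝ := limUnder atTop (fun n => RSsum f g t n)

/-- Discrete covariation sums along dyadic partitions. -/
def QVsum (f g : ℝ → ℝ) (t : ℝ) (n : ℕ) : ℝ :=
  ∑ i ∈ Finset.range (2 ^ n),
    (f (t * (i + 1) / 2 ^ n) - f (t * i / 2 ^ n)) *
      (g (t * (i + 1) / 2 ^ n) - g (t * i / 2 ^ n))

/-- Sum of products of jumps `∑_{0 < s ≤ t} Δf Δg`. -/
def jumpSum (f g : ℝ → ℝ) (t : ℝ) : ℝ :=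
  ∑' s : ℝ, Set.indicator (Ioc (0 : ℝ) t) (fun u => jumpAt f u * jumpAt g u) s

/-- A local martingale: there is a localizing sequence of stopping times. -/
def IsLocalMartingale {Ω : Type*} [m : MeasurableSpace Ω] (F : Filtration ℝ m)
    (P : Measure Ω) (M : ℝ → Ω → ℝ) : Prop :=
  ∃ τ : ℕ → Ω → ℝ, (∀ n, IsStoppingTime F (fun ω => ((τ n ω : ℝ) : WithTop ℝ))) ∧
    (∀ ω, Tendsto (fun n => τ n ω) atTop atTop) ∧
    ∀ n, Martingale (stoppedProcess M (fun ω => ((τ n ω : ℝ) : WithTop ℝ))) F P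

/-- A (càdlàg) semimartingale: adapted, càdlàg, and decomposable as a local
martingale plus an adapted càdlàg process of locally finite variation. -/
def IsSemimartingale {Ω : Type*} [m : MeasurableSpace Ω] (F : Filtration ℝ m)
    (P : Measure Ω) (X : ℝ → Ω → ℝ) : Prop :=
  Adapted F X ∧ (∀ ω, Cadlag fun t => X t ω) ∧
  ∃ M A : ℝ → Ω → ℝ, (∀ t ω, X t ω = M t ω + A t ω) ∧
    IsLocalMartingale F P M ∧ Adapted F A ∧ (∀ ω, Cadlag fun t => A t ω) ∧
    (∀ ω, ∀ T > (0 : ℝ), eVariationOn (fun t => A t ω) (Icc 0 T) < ⊤)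

/-- The filtration satisfies the usual hypotheses w.r.t. `P`:
right-continuity and completeness. -/
def UsualConditions {Ω : Type*} [m : MeasurableSpace Ω] (F : Filtration ℝ m)
    (P : Measure Ω) : Prop :=
  (∀ t : ℝ, F t = ⨅ (s : ℝ) (_ : t < s), F s) ∧
  (∀ t : ℝ, ∀ s : Set Ω, P s = 0 → MeasurableSet[F t] s)

/-- Uniform convergence on compacts in probability, as `c ↓ 0`. -/
def UCP {Ω : Type*} [m : MeasurableSpace Ω] (P : Measure Ω)
    (Fc : ℝ → ℝ → Ω → ℝ) (G : ℝ → Ω → ℝ) : Prop :=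
  ∀ T > (0 : ℝ), ∀ ε > (0 : ℝ),
    Tendsto (fun c => P {ω | ε ≤ ⨆ t : Icc (0 : ℝ) T, |Fc c t ω - G t ω|})
      (nhdsWithin 0 (Ioi 0)) (nhds 0)

/-- Standard Brownian motion started at `0`. -/
def IsStandardBM {Ω : Type*} [m : MeasurableSpace Ω] (P : Measure Ω)
    (B : ℝ → Ω → ℝ) : Prop :=
  (∀ ω, B 0 ω = 0) ∧ (∀ ω, Continuous fun t => B t ω) ∧
  (∀ t, Measurable (B t)) ∧
  (∀ s t : ℝ, 0 ≤ s → s ≤ t →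
    P.map (fun ω => B t ω - B s ω) = ProbabilityTheory.gaussianReal 0 ((t - s).toNNReal)) ∧
  (∀ n : ℕ, ∀ t : Fin (n + 1) → ℝ, Monotone t → (∀ i, 0 ≤ t i) →
    ProbabilityTheory.iIndepFun
      (fun (i : Fin n) ω => B (t i.succ) ω - B (t i.castSucc) ω) P)

/-- Natural σ-algebra of the process `B` up to time `t`. -/
def naturalSigma {Ω : Type*} (B : ℝ → Ω → ℝ) (t : ℝ) : MeasurableSpace Ω :=
  ⨆ s ∈ Iic t, MeasurableSpace.comap (B s) inferInstance


section AuxStmt2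

variable {X : ℝ → ℝ} {c : ℝ}

/-- A càdlàg function is bounded on compact intervals. -/
lemma cadlag_abs_bound (hX : Cadlag X) (a b : ℝ) :
    ∃ M : ℝ, ∀ x ∈ Icc a b, |X x| ≤ M := by
  have hloc : ∀ t : ℝ, ∃ U : Set ℝ, U ∈ nhds t ∧ ∃ M : ℝ, 0 ≤ M ∧ ∀ x ∈ U, |X x| ≤ M := by
    intro t
    obtain ⟨l, hl⟩ := hX.2 t
    have h1 : X ⁻¹' Metric.ball (X t) 1 ∈ nhdsWithin t (Ici t) :=
      (hX.1 t) (Metric.ball_mem_nhds _ one_pos)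
    have h2 : X ⁻¹' Metric.ball l 1 ∈ nhdsWithin t (Iio t) :=
      hl (Metric.ball_mem_nhds _ one_pos)
    obtain ⟨u, hu, hIco⟩ := mem_nhdsGE_iff_exists_Ico_subset.mp h1
    obtain ⟨v, hv, hIoo⟩ := mem_nhdsLT_iff_exists_Ioo_subset.mp h2
    refine ⟨Ioo v u, Ioo_mem_nhds hv hu, max (|X t| + 1) (|l| + 1), ?_, ?_⟩
    · exact le_trans (by positivity) (le_max_left _ _)
    intro x hx
    rcases lt_or_ge x t with hxt | hxt
    · have hmem := hIoo ⟨hx.1, hxt⟩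
      have hd : |X x - l| < 1 := by
        simpa [Real.dist_eq] using hmem
      have : |X x| ≤ |l| + 1 := by
        have := abs_sub_abs_le_abs_sub (X x) l
        linarith
      exact this.trans (le_max_right _ _)
    · have hmem := hIco ⟨hxt, hx.2⟩
      have hd : |X x - X t| < 1 := by
        simpa [Real.dist_eq] using hmem
      have : |X x| ≤ |X t| + 1 := by
        have := abs_sub_abs_le_abs_sub (X x) (X t)
        linarith
      exact this.trans (le_max_left _ _)
  choose U hU M hM0 hM using hloc
  obtain ⟨F, hF⟩ := isCompact_Icc.elim_nhds_subcover U (fun x _ => hU x)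
  refine ⟨∑ t ∈ F, M t, ?_⟩
  intro x hx
  obtain ⟨t, htF, hxt⟩ : ∃ t ∈ F, x ∈ U t := by
    have := hF.2 hx
    simpa using this
  calc |X x| ≤ M t := hM t x hxt
    _ ≤ ∑ t ∈ F, M t := Finset.single_le_sum (fun i _ => hM0 i) htF

lemma bddAbove_XIcc (hX : Cadlag X) (a b : ℝ) : BddAbove (X '' Icc a b) := by
  obtain ⟨M, hM⟩ := cadlag_abs_bound hX a b
  exact ⟨M, by rintro y ⟨x, hx, rfl⟩; exact (abs_le.mp (hM x hx)).2⟩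

lemma bddBelow_XIcc (hX : Cadlag X) (a b : ℝ) : BddBelow (X '' Icc a b) := by
  obtain ⟨M, hM⟩ := cadlag_abs_bound hX a b
  exact ⟨-M, by rintro y ⟨x, hx, rfl⟩; exact (abs_le.mp (hM x hx)).1⟩

lemma le_supOn (hX : Cadlag X) {a b x : ℝ} (hx : x ∈ Icc a b) : X x ≤ supOn X a b :=
  le_csSup (bddAbove_XIcc hX a b) (mem_image_of_mem X hx)

lemma infOn_le (hX : Cadlag X) {a b x : ℝ} (hx : x ∈ Icc a b) : infOn X a b ≤ X x :=
  csInf_le (bddBelow_XIcc hX a b) (mem_image_of_mem X hx)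

lemma supOn_le {a b M : ℝ} (hab : a ≤ b) (h : ∀ x ∈ Icc a b, X x ≤ M) :
    supOn X a b ≤ M :=
  csSup_le (Nonempty.image X (nonempty_Icc.mpr hab)) (by rintro y ⟨x, hx, rfl⟩; exact h x hx)

lemma le_infOn {a b M : ℝ} (hab : a ≤ b) (h : ∀ x ∈ Icc a b, M ≤ X x) :
    M ≤ infOn X a b :=
  le_csInf (Nonempty.image X (nonempty_Icc.mpr hab)) (by rintro y ⟨x, hx, rfl⟩; exact h x hx)

lemma Td_eq (X : ℝ → ℝ) (c : ℝ) (k : ℕ) : Td X c k = nextTd X c (Tu X c k) := by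
  cases k <;> rfl

lemma Tu_succ (X : ℝ → ℝ) (c : ℝ) (k : ℕ) : Tu X c (k + 1) = nextTu X c (Td X c k) := rfl

/-- If `a` is finite, the next up-time is strictly after `a`. -/
lemma lt_nextTu (hX : Cadlag X) (hc : 0 < c) {a : ℝ≥0∞} (ha : a ≠ ⊤) :
    a < nextTu X c a := by
  set t : ℝ := a.toReal with ht
  have h1 : X ⁻¹' Metric.ball (X t) c ∈ nhdsWithin t (Ici t) :=
    (hX.1 t) (Metric.ball_mem_nhds _ hc)
  obtain ⟨u, hu, hIco⟩ := mem_nhdsGE_iff_exists_Ico_subset.mp h1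
  have hbd : ∀ x ∈ Ico t u, |X x - X t| < c := by
    intro x hx
    simpa [Real.dist_eq] using hIco hx
  have hle : ENNReal.ofReal u ≤ nextTu X c a := by
    refine le_sInf ?_
    rintro w ⟨s, hs0, has, rfl, hgt⟩
    by_contra hlt
    push_neg at hlt
    have hsu : s < u := by
      have := (ENNReal.ofReal_lt_ofReal_iff_of_nonneg hs0).mp hlt
      exact this
    have hts : t ≤ s := ENNReal.toReal_le_of_le_ofReal hs0 has
    have hsub : Icc t s ⊆ Ico t u := fun x hx => ⟨hx.1, lt_of_le_of_lt hx.2 hsu⟩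
    have hinf : X t - c ≤ infOn X t s :=
      le_infOn hts (fun x hx => by have := hbd x (hsub hx); cases abs_sub_lt_iff.mp this; linarith)
    have hXs : X s < X t + c := by
      have := hbd s ⟨hts, hsu⟩
      cases abs_sub_lt_iff.mp this; linarith
    have : X s - infOn X t s ≤ 2 * c := by linarith
    linarith
  have htpos : 0 ≤ t := ENNReal.toReal_nonneg
  have : a < ENNReal.ofReal u := by
    have : a = ENNReal.ofReal t := (ENNReal.ofReal_toReal ha).symm
    rw [this]
    exact (ENNReal.ofReal_lt_ofReal_iff (lt_of_le_of_lt htpos hu)).mpr hu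
  exact lt_of_lt_of_le this hle

end AuxStmt2

/-- the construction `X^c` uniformly approximates `X`:
`|X(s) − X^c(s)| ≤ c` for all `s ≥ 0`. -/
theorem stmt_2 (X : ℝ → ℝ) (hX : Cadlag X) (c : ℝ) (hc : 0 < c)
    (hud : Tu X c 0 ≤ TdIni X c) :
    ∀ s : ℝ, 0 ≤ s → |X s - Xc X c s| ≤ c := by
  intro s hs
  unfold Xc
  split_ifs with h1 h2 h3
  · -- before the first up time: Xc = X 0
    have hsup : supOn X 0 s - X 0 ≤ c := by
      by_contra hgt
      push_neg at hgt
      have : Tu X c 0 ≤ ENNReal.ofReal s := sInf_le ⟨s, hs, rfl, hgt⟩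
      exact absurd h1 (not_lt.mpr this)
    have hinf : X 0 - infOn X 0 s ≤ c := by
      by_contra hgt
      push_neg at hgt
      have : TdIni X c ≤ ENNReal.ofReal s := sInf_le ⟨s, hs, rfl, hgt⟩
      exact absurd (lt_of_lt_of_le h1 (hud.trans this)) (lt_irrefl _)
    have hle : X s ≤ supOn X 0 s := le_supOn hX ⟨hs, le_refl s⟩
    have hge : infOn X 0 s ≤ X s := infOn_le hX ⟨hs, le_refl s⟩
    rw [abs_le]; constructor <;> linarith
  · -- in an up interval `[Tu k, Td k)`
    set k := Nat.find h2 with hk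
    obtain ⟨hTus, hsTd⟩ := Nat.find_spec h2
    have htufin : Tu X c k ≠ ⊤ := by
      intro hT; rw [hT] at hTus
      exact absurd (top_le_iff.mp hTus) (by simp)
    have has : (Tu X c k).toReal ≤ s := ENNReal.toReal_le_of_le_ofReal hs hTus
    have hub : supOn X (Tu X c k).toReal s - X s ≤ 2 * c := by
      by_contra hgt
      push_neg at hgt
      have : Td X c k ≤ ENNReal.ofReal s := by
        rw [Td_eq]; exact sInf_le ⟨s, hs, hTus, rfl, hgt⟩
      exact absurd hsTd (not_lt.mpr this)
    have hle : X s ≤ supOn X (Tu X c k).toReal s := le_supOn hX ⟨has, le_refl s⟩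
    rw [abs_le]; constructor <;> linarith
  · -- in a down interval `[Td k, Tu (k+1))`
    set k := Nat.find h3 with hk
    obtain ⟨hTds, hsTu⟩ := Nat.find_spec h3
    have has : (Td X c k).toReal ≤ s := ENNReal.toReal_le_of_le_ofReal hs hTds
    have hub : X s - infOn X (Td X c k).toReal s ≤ 2 * c := by
      by_contra hgt
      push_neg at hgt
      have : Tu X c (k + 1) ≤ ENNReal.ofReal s := by
        rw [Tu_succ]; exact sInf_le ⟨s, hs, hTds, rfl, hgt⟩
      exact absurd hsTu (not_lt.mpr this)
    have hge : infOn X (Td X c k).toReal s ≤ X s := infOn_le hX ⟨has, le_refl s⟩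
    rw [abs_le]; constructor <;> linarith
  · -- impossible case: all times are `≤ s`, contradicting càdlàg
    exfalso
    have key : ∀ k, Tu X c k ≤ ENNReal.ofReal s ∧ Td X c k ≤ ENNReal.ofReal s := by
      intro k
      induction k with
      | zero =>
        have h0 : Tu X c 0 ≤ ENNReal.ofReal s := not_lt.mp h1
        exact ⟨h0, not_lt.mp fun hlt => h2 ⟨0, h0, hlt⟩⟩
      | succ n ih =>
        have htu : Tu X c (n + 1) ≤ ENNReal.ofReal s :=
          not_lt.mp fun hlt => h3 ⟨n, ih.2, hlt⟩
        exact ⟨htu, not_lt.mp fun hlt => h2 ⟨n + 1, htu, hlt⟩⟩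
    have hfinu : ∀ k, Tu X c k ≠ ⊤ := fun k hT => by
      have := (key k).1; rw [hT] at this; exact absurd (top_le_iff.mp this) (by simp)
    have hfind : ∀ k, Td X c k ≠ ⊤ := fun k hT => by
      have := (key k).2; rw [hT] at this; exact absurd (top_le_iff.mp this) (by simp)
    set a : ℕ → ℝ := fun k => (Tu X c k).toReal with ha
    set b : ℕ → ℝ := fun k => (Td X c k).toReal with hb
    have ha_le : ∀ k, a k ≤ s := fun k => ENNReal.toReal_le_of_le_ofReal hs (key k).1
    have hbdd : BddAbove (Set.range a) := ⟨s, by rintro y ⟨k, rfl⟩; exact ha_le k⟩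
    have hba : ∀ k, b k < a (k + 1) := by
      intro k
      have : Td X c k < Tu X c (k + 1) := by
        rw [Tu_succ]; exact lt_nextTu hX hc (hfind k)
      exact (ENNReal.toReal_lt_toReal (hfind k) (hfinu (k + 1))).mpr this
    set tstar : ℝ := ⨆ k, a k with htstar
    have hat : ∀ k, a k ≤ tstar := fun k => le_ciSup hbdd k
    have hbt : ∀ k, b k < tstar := fun k => lt_of_lt_of_le (hba k) (hat (k + 1))
    have htpos : 0 < tstar := lt_of_le_of_lt ENNReal.toReal_nonneg (hbt 0)
    -- left limit at tstar
    obtain ⟨l, hl⟩ := hX.2 tstar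
    have hmem : X ⁻¹' Metric.ball l c ∈ nhdsWithin tstar (Iio tstar) :=
      hl (Metric.ball_mem_nhds _ hc)
    obtain ⟨v, hv, hIoo⟩ := mem_nhdsLT_iff_exists_Ioo_subset.mp hmem
    -- pick k with v < a k
    obtain ⟨k, hvk⟩ : ∃ k, v < a k := by
      by_contra hcon
      push_neg at hcon
      exact absurd (ciSup_le hcon) (not_le.mpr hv)
    -- extract a point s' slightly after Td k with big oscillation before it
    have hTdlt : Td X c k < ENNReal.ofReal tstar := by
      have : Td X c k = ENNReal.ofReal (b k) := (ENNReal.ofReal_toReal (hfind k)).symm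
      rw [this]
      exact (ENNReal.ofReal_lt_ofReal_iff htpos).mpr (hbt k)
    rw [Td_eq] at hTdlt
    obtain ⟨w, hwS, hwlt⟩ := sInf_lt_iff.mp hTdlt
    obtain ⟨s', hs'0, hTus', rfl, hgt⟩ := hwS
    have hs'lt : s' < tstar := (ENNReal.ofReal_lt_ofReal_iff_of_nonneg hs'0).mp hwlt
    have haks' : a k ≤ s' := ENNReal.toReal_le_of_le_ofReal hs'0 hTus'
    -- a point p in [a k, s'] with X p > X s' + 2c
    have hlt2 : X s' + 2 * c < supOn X (Tu X c k).toReal s' := by linarith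
    obtain ⟨y, hy, hylt⟩ := exists_lt_of_lt_csSup
      (Nonempty.image X (nonempty_Icc.mpr haks')) hlt2
    obtain ⟨p, hp, rfl⟩ := hy
    -- both p and s' are in Ioo v tstar
    have hpIoo : p ∈ Ioo v tstar :=
      ⟨lt_of_lt_of_le hvk hp.1, lt_of_le_of_lt hp.2 hs'lt⟩
    have hs'Ioo : s' ∈ Ioo v tstar := ⟨lt_of_lt_of_le hvk haks', hs'lt⟩
    have hdp : |X p - l| < c := by simpa [Real.dist_eq] using hIoo hpIoo
    have hds : |X s' - l| < c := by simpa [Real.dist_eq] using hIoo hs'Ioo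
    cases abs_sub_lt_iff.mp hdp
    cases abs_sub_lt_iff.mp hds
    linarith

end
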